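/- arXiv:1202.6442 — 6 statements merged into one kernel-verified Lean document; each statement's English description precedes it below -/
import Mathlib

section
/- Let M and G be groups and let Γ be a normal subgroup of M. Let φ : Γ → G be a group homomorphism such that for every f ∈ M there exists x ∈ G with φ(f·γ·f⁻¹) = x·φ(γ)·x⁻¹ for all γ ∈ Γ. Then there exists a group homomorphism Ψ : M → Aut(φ(Γ)), from M to the automorphism group of the image subgroup φ(Γ) ≤ G, satisfying Ψ(f)(φ(γ)) = φ(f·γ·f⁻¹) for all f ∈ M and γ ∈ Γ. -/
/-- If the class of `φ : Γ → G` (for `Γ ⊴ M`) is a global fixed point of the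
`M`-action on the deformation space, then there is a homomorphism `Ψ : M → Aut(φ(Γ))` with
`Ψ(f)(φ(γ)) = φ(fγf⁻¹)` for all `f ∈ M`, `γ ∈ Γ`. -/
theorem stmt2 {M G : Type*} [Group M] [Group G] (Γ : Subgroup M) (hN : Γ.Normal)
    (φ : Γ →* G)
    (hfix : ∀ f : M, ∃ x : G, ∀ γ : Γ,
      φ ⟨f * γ * f⁻¹, hN.conj_mem γ γ.2 f⟩ = x * φ γ * x⁻¹) :
    ∃ Ψ : M →* MulAut ↥φ.range, ∀ (f : M) (γ : Γ),
      (Ψ f ⟨φ γ, MonoidHom.mem_range.mpr ⟨γ, rfl⟩⟩ : G) =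
        φ ⟨f * γ * f⁻¹, hN.conj_mem γ γ.2 f⟩ := by
  classical
  choose x hx using hfix
  have mem : ∀ (f : M) (a : φ.range), x f * (a : G) * (x f)⁻¹ ∈ φ.range := by
    rintro f ⟨-, γ, rfl⟩
    exact ⟨⟨f * γ * f⁻¹, hN.conj_mem γ γ.2 f⟩, hx f γ⟩
  let T : M → (φ.range →* φ.range) := fun f =>
    ((MulAut.conj (x f)).toMonoidHom.comp φ.range.subtype).codRestrict _ (fun a => by
      simpa [MulAut.conj] using mem f a)
  have hT : ∀ (f : M) (γ : Γ),
      T f ⟨φ γ, ⟨γ, rfl⟩⟩ =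
        ⟨φ ⟨f * γ * f⁻¹, hN.conj_mem γ γ.2 f⟩, ⟨_, rfl⟩⟩ := by
    intro f γ
    ext
    simpa [T, MulAut.conj] using (hx f γ).symm
  have key : ∀ (f g : M) (a : ↥φ.range), T f (T g a) = T (f * g) a := by
    rintro f g ⟨-, γ, rfl⟩
    rw [hT g γ, hT f, hT (f * g)]
    ext
    refine congrArg φ (Subtype.ext ?_)
    simp [mul_assoc]
  have inv_key : ∀ (f : M) (a : ↥φ.range), T f⁻¹ (T f a) = a := by
    rintro f a
    rw [key]
    rcases a with ⟨-, γ, rfl⟩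
    rw [hT]
    ext
    refine congrArg φ (Subtype.ext ?_)
    simp
  let Ψe : M → MulAut ↥φ.range := fun f =>
    { toFun := T f, invFun := T f⁻¹,
      left_inv := inv_key f,
      right_inv := fun a => by
        have := inv_key f⁻¹ a
        rwa [inv_inv] at this,
      map_mul' := map_mul (T f) }
  refine ⟨{ toFun := Ψe, map_one' := ?_, map_mul' := ?_ }, ?_⟩
  · ext a
    rcases a with ⟨-, γ, rfl⟩
    show ((T 1 ⟨φ γ, ⟨γ, rfl⟩⟩ : ↥φ.range) : G) = φ γ
    rw [hT]
    exact congrArg φ (Subtype.ext (by simp))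
  · intro f g
    ext a
    show ((T (f * g) a : ↥φ.range) : G) = ((T f (T g a) : ↥φ.range) : G)
    rw [key]
  · intro f γ
    show ((T f ⟨φ γ, ⟨γ, rfl⟩⟩ : ↥φ.range) : G) = _
    rw [hT]
end

section
/- Let K be a field, n a natural number, M a group, and Γ a normal subgroup of M. Let φ : Γ → GL(n,K) be a group homomorphism such that for every f ∈ M there exists x ∈ GL(n,K) with φ(f·γ·f⁻¹) = x·φ(γ)·x⁻¹ for all γ ∈ Γ. Let W be the K-linear span inside the space of n×n matrices over K of the set {φ(γ) : γ ∈ Γ}. Then dim_K W ≤ n², and there exists a group homomorphism ρ : M → GL(W) (the group of K-linear automorphisms of W) such that ρ(f)(φ(γ)) = φ(f·γ·f⁻¹) for all f ∈ M and γ ∈ Γ, and such that for every f ∈ M one has ρ(f) = id_W if and only if φ(f·γ·f⁻¹) = φ(γ) for all γ ∈ Γ. -/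
namespace Stmt4Aux

variable {K : Type*} [Field K] {n : ℕ} {M : Type*} [Group M]
  {Γ : Subgroup M} (hN : Γ.Normal) (φ : Γ →* GL (Fin n) K)

def Wsp : Submodule K (Matrix (Fin n) (Fin n) K) :=
  Submodule.span K (Set.range fun γ : Γ => ((φ γ : Matrix (Fin n) (Fin n) K)))

lemma mem_Wsp (γ : Γ) : (φ γ : Matrix (Fin n) (Fin n) K) ∈ Wsp φ :=
  Submodule.subset_span ⟨γ, rfl⟩

def cmap (x : GL (Fin n) K) : Matrix (Fin n) (Fin n) K →ₗ[K] Matrix (Fin n) (Fin n) K :=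
  (LinearMap.mulRight K ((x⁻¹ : GL (Fin n) K) : Matrix (Fin n) (Fin n) K)).comp
    (LinearMap.mulLeft K ((x : GL (Fin n) K) : Matrix (Fin n) (Fin n) K))

lemma cmap_apply (x : GL (Fin n) K) (A : Matrix (Fin n) (Fin n) K) :
    cmap x A = (x : Matrix (Fin n) (Fin n) K) * A * ((x⁻¹ : GL (Fin n) K) : Matrix (Fin n) (Fin n) K) := rfl

variable (hfix : ∀ f : M, ∃ x : GL (Fin n) K, ∀ γ : Γ,
    φ ⟨f * γ * f⁻¹, hN.conj_mem γ γ.2 f⟩ = x * φ γ * x⁻¹)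

noncomputable def xc (f : M) : GL (Fin n) K := (hfix f).choose

lemma cmap_xc (f : M) (γ : Γ) :
    cmap (xc hN φ hfix f) (φ γ : Matrix (Fin n) (Fin n) K)
      = (φ ⟨f * γ * f⁻¹, hN.conj_mem γ γ.2 f⟩ : Matrix (Fin n) (Fin n) K) := by
  have h := congrArg Units.val ((hfix f).choose_spec γ)
  simp only [Units.val_mul] at h
  rw [cmap_apply, mul_assoc, ← Units.val_mul, ← Units.val_mul, ← mul_assoc]
  exact h.symm

lemma cmap_mapsTo (f : M) :
    ∀ A ∈ Wsp φ, cmap (xc hN φ hfix f) A ∈ Wsp φ := by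
  intro A hA
  induction hA using Submodule.span_induction with
  | mem x h =>
    obtain ⟨γ, rfl⟩ := h
    rw [cmap_xc]
    exact mem_Wsp φ _
  | zero => simp
  | add x y hx hy ihx ihy => simpa [map_add] using (Wsp φ).add_mem ihx ihy
  | smul a x hx ihx => simpa [map_smul] using (Wsp φ).smul_mem a ihx

noncomputable def r (f : M) : Wsp φ →ₗ[K] Wsp φ :=
  (cmap (xc hN φ hfix f)).restrict (cmap_mapsTo hN φ hfix f)

lemma r_apply (f : M) (γ : Γ) :
    (r hN φ hfix f ⟨(φ γ : Matrix (Fin n) (Fin n) K), mem_Wsp φ γ⟩ :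
      Matrix (Fin n) (Fin n) K)
      = (φ ⟨f * γ * f⁻¹, hN.conj_mem γ γ.2 f⟩ : Matrix (Fin n) (Fin n) K) := by
  simp [r, LinearMap.restrict_apply, cmap_xc]

lemma r_apply' (f : M) (γ : Γ) {hm} :
    r hN φ hfix f ⟨(φ γ : Matrix (Fin n) (Fin n) K), hm⟩
      = ⟨(φ ⟨f * γ * f⁻¹, hN.conj_mem γ γ.2 f⟩ : Matrix (Fin n) (Fin n) K),
          mem_Wsp φ _⟩ :=
  Subtype.ext (r_apply hN φ hfix f γ)

lemma φcongr {a b : Γ} (h : (a : M) = (b : M)) :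
    (φ a : Matrix (Fin n) (Fin n) K) = (φ b : Matrix (Fin n) (Fin n) K) :=
  congrArg Units.val (congrArg φ (Subtype.ext h))

lemma ext_on {g h : Wsp φ →ₗ[K] Wsp φ}
    (H : ∀ γ : Γ, g ⟨(φ γ : Matrix (Fin n) (Fin n) K), mem_Wsp φ γ⟩
      = h ⟨(φ γ : Matrix (Fin n) (Fin n) K), mem_Wsp φ γ⟩) : g = h := by
  apply LinearMap.ext
  rintro ⟨w, hw⟩
  induction hw using Submodule.span_induction with
  | mem x hx =>
    obtain ⟨γ, rfl⟩ := hx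
    exact H γ
  | zero => simp only [show (⟨0, (Wsp φ).zero_mem⟩ : Wsp φ) = 0 from rfl, map_zero]
  | add x y hx hy ihx ihy =>
    have : (⟨x + y, (Wsp φ).add_mem hx hy⟩ : Wsp φ) = ⟨x, hx⟩ + ⟨y, hy⟩ := rfl
    simp only [this, map_add, Submodule.coe_add, ihx, ihy]
  | smul a x hx ihx =>
    have : (⟨a • x, (Wsp φ).smul_mem a hx⟩ : Wsp φ) = a • ⟨x, hx⟩ := rfl
    simp only [this, map_smul, Submodule.coe_smul, ihx]

lemma eext {g h : Wsp φ ≃ₗ[K] Wsp φ}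
    (H : ∀ γ : Γ, g ⟨(φ γ : Matrix (Fin n) (Fin n) K), mem_Wsp φ γ⟩
      = h ⟨(φ γ : Matrix (Fin n) (Fin n) K), mem_Wsp φ γ⟩) : g = h :=
  LinearEquiv.toLinearMap_injective (ext_on φ H)

noncomputable def ρe (f : M) : Wsp φ ≃ₗ[K] Wsp φ :=
  LinearEquiv.ofLinear (r hN φ hfix f) (r hN φ hfix f⁻¹)
    (by
      apply ext_on φ
      intro γ
      rw [LinearMap.comp_apply, r_apply' hN φ hfix f⁻¹ γ, r_apply' hN φ hfix f, LinearMap.id_coe, id_eq]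
      exact Subtype.ext (φcongr φ (by group)))
    (by
      apply ext_on φ
      intro γ
      rw [LinearMap.comp_apply, r_apply' hN φ hfix f γ, r_apply' hN φ hfix f⁻¹, LinearMap.id_coe, id_eq]
      exact Subtype.ext (φcongr φ (by group)))

lemma ρe_apply (f : M) (γ : Γ) {hm} :
    ρe hN φ hfix f ⟨(φ γ : Matrix (Fin n) (Fin n) K), hm⟩
      = ⟨(φ ⟨f * γ * f⁻¹, hN.conj_mem γ γ.2 f⟩ : Matrix (Fin n) (Fin n) K),
          mem_Wsp φ _⟩ :=
  r_apply' hN φ hfix f γ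

noncomputable def ρh : M →* (Wsp φ ≃ₗ[K] Wsp φ) where
  toFun f := ρe hN φ hfix f
  map_one' := by
    apply eext φ
    intro γ
    rw [ρe_apply]
    exact Subtype.ext (φcongr φ (by group))
  map_mul' f g := by
    apply eext φ
    intro γ
    have : (ρe hN φ hfix f * ρe hN φ hfix g) ⟨(φ γ : Matrix (Fin n) (Fin n) K), mem_Wsp φ γ⟩
        = ρe hN φ hfix f (ρe hN φ hfix g ⟨(φ γ : Matrix (Fin n) (Fin n) K), mem_Wsp φ γ⟩) := rfl
    rw [this, ρe_apply, ρe_apply, ρe_apply]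
    exact Subtype.ext (φcongr φ (by group))

end Stmt4Aux

open Stmt4Aux in
/-- If the class of a linear representation `φ : Γ → GL(n,K)` of a normal subgroup
`Γ ⊴ M` is a global fixed point of the `M`-action on the deformation space, then the `K`-span `W`
of `φ(Γ)` inside the `n×n` matrices has dimension at most `n²`, and there is a homomorphism
`ρ : M → GL(W)` with `ρ(f)(φ(γ)) = φ(fγf⁻¹)`, and `ρ(f) = id_W` iff `φ(fγf⁻¹) = φ(γ)` for all
`γ ∈ Γ`. -/
theorem stmt4 (K : Type*) [Field K] (n : ℕ) {M : Type*} [Group M]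
    (Γ : Subgroup M) (hN : Γ.Normal) (φ : Γ →* GL (Fin n) K)
    (hfix : ∀ f : M, ∃ x : GL (Fin n) K, ∀ γ : Γ,
      φ ⟨f * γ * f⁻¹, hN.conj_mem γ γ.2 f⟩ = x * φ γ * x⁻¹) :
    Module.finrank K
        (Submodule.span K (Set.range fun γ : Γ => ((φ γ : Matrix (Fin n) (Fin n) K)))) ≤ n ^ 2 ∧
    ∃ ρ : M →*
        ((Submodule.span K (Set.range fun γ : Γ => ((φ γ : Matrix (Fin n) (Fin n) K)))) ≃ₗ[K]
         (Submodule.span K (Set.range fun γ : Γ => ((φ γ : Matrix (Fin n) (Fin n) K))))),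
      (∀ (f : M) (γ : Γ),
        ((ρ f ⟨(φ γ : Matrix (Fin n) (Fin n) K), Submodule.subset_span ⟨γ, rfl⟩⟩ :
            Submodule.span K (Set.range fun γ : Γ => ((φ γ : Matrix (Fin n) (Fin n) K)))) :
          Matrix (Fin n) (Fin n) K)
          = φ ⟨f * γ * f⁻¹, hN.conj_mem γ γ.2 f⟩) ∧
      (∀ f : M, ρ f = 1 ↔ ∀ γ : Γ, φ ⟨f * γ * f⁻¹, hN.conj_mem γ γ.2 f⟩ = φ γ) := by
  constructor
  · have h1 := Submodule.finrank_le
      (Submodule.span K (Set.range fun γ : Γ => ((φ γ : Matrix (Fin n) (Fin n) K))))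
    have h2 : Module.finrank K (Matrix (Fin n) (Fin n) K) = n ^ 2 := by
      simp [Module.finrank_matrix, pow_two]
    omega
  · refine ⟨ρh hN φ hfix, ?_, ?_⟩
    · intro f γ
      exact congrArg Subtype.val (ρe_apply hN φ hfix f γ)
    · intro f
      constructor
      · intro h γ
        have := congrArg (fun e : (Wsp φ ≃ₗ[K] Wsp φ) =>
          (e ⟨(φ γ : Matrix (Fin n) (Fin n) K), mem_Wsp φ γ⟩ :
            Matrix (Fin n) (Fin n) K)) h
        exact Units.ext
          ((congrArg Subtype.val (ρe_apply hN φ hfix f γ)).symm.trans this)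
      · intro h
        apply eext φ (g := ρe hN φ hfix f) (h := 1)
        intro γ
        exact (ρe_apply hN φ hfix f γ).trans
          (Subtype.ext (congrArg Units.val (h γ)))
end

section
/- Let K be a field, M a group, and Γ a normal subgroup of M whose centralizer in M is trivial, i.e. C_M(Γ) = {f ∈ M : f·γ = γ·f for all γ ∈ Γ} = {1}. Suppose there exist a natural number n and an injective group homomorphism φ : Γ → GL(n,K) such that for every f ∈ M there exists x ∈ GL(n,K) with φ(f·γ·f⁻¹) = x·φ(γ)·x⁻¹ for all γ ∈ Γ. Then M is K-linear; more precisely, there exist a finite-dimensional K-vector space W with dim_K W ≤ n² and an injective group homomorphism ρ : M → GL(W). -/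
private def conjE {K : Type*} [Field K] {n : ℕ} (u : GL (Fin n) K) :
    Matrix (Fin n) (Fin n) K ≃ₗ[K] Matrix (Fin n) (Fin n) K where
  toFun A := (u : Matrix (Fin n) (Fin n) K) * A * ((u⁻¹ : GL (Fin n) K) : Matrix (Fin n) (Fin n) K)
  map_add' A B := by noncomm_ring
  map_smul' c A := by simp [Matrix.smul_mul, Matrix.mul_smul]
  invFun A := ((u⁻¹ : GL (Fin n) K) : Matrix (Fin n) (Fin n) K) * A * (u : Matrix (Fin n) (Fin n) K)
  left_inv A := by
    have h1 : ((u⁻¹ : GL (Fin n) K) : Matrix (Fin n) (Fin n) K) * (u : Matrix (Fin n) (Fin n) K) = 1 :=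
      Units.inv_mul u
    simp only [← mul_assoc, h1, one_mul]
    rw [mul_assoc, h1, mul_one]
  right_inv A := by
    have h1 : (u : Matrix (Fin n) (Fin n) K) * ((u⁻¹ : GL (Fin n) K) : Matrix (Fin n) (Fin n) K) = 1 :=
      Units.mul_inv u
    simp only [← mul_assoc, h1, one_mul]
    rw [mul_assoc, h1, mul_one]

private lemma conjE_apply {K : Type*} [Field K] {n : ℕ} (u : GL (Fin n) K)
    (A : Matrix (Fin n) (Fin n) K) :
    conjE u A = (u : Matrix (Fin n) (Fin n) K) * A *
      ((u⁻¹ : GL (Fin n) K) : Matrix (Fin n) (Fin n) K) := rfl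

/-- If `Γ ⊴ M` has trivial centralizer in `M` and there is an injective
`φ : Γ → GL(n,K)` representing a global fixed point of the `M`-action on the deformation space,
then `M` is `K`-linear: there is a `K`-vector space `W` with `dim_K W ≤ n²` and an injective
homomorphism `ρ : M → GL(W)`. -/
theorem stmt6 (K : Type*) [Field K] {M : Type*} [Group M]
    (Γ : Subgroup M) (hN : Γ.Normal)
    (hc : ∀ f : M, (∀ γ ∈ Γ, f * γ = γ * f) → f = 1)
    (n : ℕ) (φ : Γ →* GL (Fin n) K) (hφ : Function.Injective φ)
    (hfix : ∀ f : M, ∃ x : GL (Fin n) K, ∀ γ : Γ,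
      φ ⟨f * γ * f⁻¹, hN.conj_mem γ γ.2 f⟩ = x * φ γ * x⁻¹) :
    ∃ W : Submodule K (Matrix (Fin n) (Fin n) K),
      Module.finrank K W ≤ n ^ 2 ∧
      ∃ ρ : M →* (W ≃ₗ[K] W), Function.Injective ρ := by
  classical
  choose x hx using hfix
  set S : Set (Matrix (Fin n) (Fin n) K) :=
    Set.range (fun γ : Γ => (φ γ : Matrix (Fin n) (Fin n) K)) with hS
  set W : Submodule K (Matrix (Fin n) (Fin n) K) := Submodule.span K S with hW
  -- matrix-level version of hx
  have hxm : ∀ (f : M) (γ : Γ),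
      conjE (x f) (φ γ : Matrix (Fin n) (Fin n) K)
        = (φ ⟨f * γ * f⁻¹, hN.conj_mem γ γ.2 f⟩ : Matrix (Fin n) (Fin n) K) := by
    intro f γ
    rw [conjE_apply]
    exact (congrArg Units.val (hx f γ)).symm
  -- conjE (x f) maps W onto W
  have hmap : ∀ f : M, W.map (conjE (x f)).toLinearMap = W := by
    intro f
    apply le_antisymm
    · rw [Submodule.map_le_iff_le_comap, hW, Submodule.span_le]
      rintro _ ⟨γ, rfl⟩
      simp only [SetLike.mem_coe, Submodule.mem_comap, LinearEquiv.coe_coe]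
      rw [hxm f γ]
      exact Submodule.subset_span ⟨_, rfl⟩
    · rw [hW, Submodule.span_le]
      rintro _ ⟨γ, rfl⟩
      refine ⟨(φ ⟨f⁻¹ * γ * f⁻¹⁻¹, hN.conj_mem γ γ.2 f⁻¹⟩ : Matrix (Fin n) (Fin n) K),
        Submodule.subset_span ⟨_, rfl⟩, ?_⟩
      simp only [LinearEquiv.coe_coe]
      rw [hxm f]
      exact congrArg Units.val (congrArg φ (Subtype.ext (by group)))
  -- the representation
  have key : ∀ (f : M) (w : Matrix (Fin n) (Fin n) K), w ∈ W →
      ∀ g : M, conjE (x (f * g)) w = conjE (x f) (conjE (x g) w) := by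
    intro f w hw g
    induction hw using Submodule.span_induction with
    | mem w hw =>
      obtain ⟨γ, rfl⟩ := hw
      rw [hxm g γ, hxm, hxm]
      exact congrArg Units.val (congrArg φ (Subtype.ext (by group)))
    | zero => simp
    | add a b _ _ ha hb => simp [map_add, ha, hb]
    | smul c a _ ha => simp [map_smul, ha]
  let g : M → (W ≃ₗ[K] W) := fun f => LinearEquiv.ofSubmodules (conjE (x f)) W W (hmap f)
  have gval : ∀ (f : M) (w : W), ((g f w : Matrix (Fin n) (Fin n) K)) = conjE (x f) w :=
    fun f w => rfl
  refine ⟨W, ?_, MonoidHom.mk' g ?_, ?_⟩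
  · calc Module.finrank K W ≤ Module.finrank K (Matrix (Fin n) (Fin n) K) :=
        Submodule.finrank_le W
      _ = n ^ 2 := by simp [Module.finrank_matrix]; ring
  · intro a b
    refine LinearEquiv.ext fun w => Subtype.ext ?_
    have hk := key a (w : Matrix (Fin n) (Fin n) K) w.2 b
    have h2 : (((g a * g b) w : W) : Matrix (Fin n) (Fin n) K)
        = conjE (x a) (conjE (x b) (w : Matrix (Fin n) (Fin n) K)) := by
      show (((g a) ((g b) w) : W) : Matrix (Fin n) (Fin n) K) = _
      rw [gval, gval]
    rw [gval, h2, hk]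
  · rw [injective_iff_map_eq_one]
    intro f hf
    apply hc
    intro γ hγ
    have h1 : g f ⟨(φ ⟨γ, hγ⟩ : Matrix (Fin n) (Fin n) K),
        Submodule.subset_span ⟨⟨γ, hγ⟩, rfl⟩⟩ = ⟨(φ ⟨γ, hγ⟩ : Matrix (Fin n) (Fin n) K),
        Submodule.subset_span ⟨⟨γ, hγ⟩, rfl⟩⟩ := by
      have hf' : g f = 1 := hf
      rw [hf']; rfl
    have h2 := congrArg Subtype.val h1
    rw [gval, hxm f ⟨γ, hγ⟩] at h2
    have h3 : φ ⟨f * γ * f⁻¹, hN.conj_mem _ hγ f⟩ = φ ⟨γ, hγ⟩ := Units.ext h2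
    have h4 := hφ h3
    have h5 : f * γ * f⁻¹ = γ := congrArg Subtype.val h4
    calc f * γ = f * γ * f⁻¹ * f := by group
      _ = γ * f := by rw [h5]
end

section
/- Let M and G be groups, let Z(M) denote the center of M, and let T ⊆ M be a subset invariant under conjugation (i.e. f·t·f⁻¹ ∈ T for all f ∈ M, t ∈ T) satisfying: (a) the centralizer of T in M equals the center of M, i.e. C_M(T) = Z(M); and (b) for all t₁, t₂ ∈ T with t₁ ≠ t₂, one has t₁·t₂⁻¹ ∉ Z(M). Then for any group homomorphism φ : M → G, the restriction of φ to T is injective if and only if the kernel of φ is contained in Z(M). -/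
/-- Let `T ⊆ M` be a conjugation-invariant subset with `C_M(T) = Z(M)` and such
that `t₁t₂⁻¹ ∉ Z(M)` for distinct `t₁, t₂ ∈ T`. Then a homomorphism `φ : M → G` is injective on
`T` if and only if `ker φ ⊆ Z(M)`. -/
theorem stmt8 {M G : Type*} [Group M] [Group G] (T : Set M)
    (hinv : ∀ (f : M), ∀ t ∈ T, f * t * f⁻¹ ∈ T)
    (hcz : ∀ f : M, (∀ t ∈ T, f * t = t * f) ↔ f ∈ Subgroup.center M)
    (hne : ∀ t₁ ∈ T, ∀ t₂ ∈ T, t₁ ≠ t₂ → t₁ * t₂⁻¹ ∉ Subgroup.center M)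
    (φ : M →* G) :
    Set.InjOn φ T ↔ ∀ f ∈ φ.ker, f ∈ Subgroup.center M := by
  constructor
  · intro hinj f hf
    rw [← hcz]
    intro t ht
    have h1 : f * t * f⁻¹ ∈ T := hinv f t ht
    have h2 : φ (f * t * f⁻¹) = φ t := by
      have hf' : φ f = 1 := hf
      simp [hf']
    have := hinj h1 ht h2
    calc f * t = (f * t * f⁻¹) * f := by group
    _ = t * f := by rw [this]
  · intro hker t₁ ht₁ t₂ ht₂ heq
    by_contra hne'
    exact hne t₁ ht₁ t₂ ht₂ hne' (hker _ (by simp [MonoidHom.mem_ker, heq]))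
end

section
/- Let K be a field, let M be a group acting on a set S, and let ι : S → M be an injective map satisfying: (a) equivariance, f·ι(s)·f⁻¹ = ι(f • s) for all f ∈ M and s ∈ S; (b) C_M(ι(S)) = Z(M), where C_M(ι(S)) is the centralizer of the image of ι and Z(M) is the center of M; and (c) for all s₁, s₂ ∈ S with s₁ ≠ s₂, ι(s₁)·ι(s₂)⁻¹ ∉ Z(M). Suppose there exist a natural number m and a group homomorphism φ : M → GL(m,K) whose kernel is contained in Z(M). Then the M-module K[S] (the K-vector space with basis S, on which f ∈ M acts by permuting basis vectors: f·e_s = e_{f • s}) has an M-invariant K-subspace V of finite codimension such that the composition of s ↦ e_s with the quotient map K[S] → K[S]/V is injective on S. -/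
/-- Let `M` act on a set `S` and let `ι : S → M` be an injective equivariant map
(`f ι(s) f⁻¹ = ι(f • s)`) with `C_M(ι(S)) = Z(M)` and `ι(s₁)ι(s₂)⁻¹ ∉ Z(M)` for `s₁ ≠ s₂`. If
there is a homomorphism `φ : M → GL(m,K)` with kernel contained in `Z(M)`, then the permutation
`M`-module `K[S]` has an `M`-invariant subspace `V` of finite codimension such that
`s ↦ e_s mod V` is injective on `S`. -/
theorem stmt11 (K : Type*) [Field K] {M S : Type*} [Group M] [MulAction M S]
    (ι : S → M) (hι : Function.Injective ι)
    (ha : ∀ (f : M) (s : S), f * ι s * f⁻¹ = ι (f • s))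
    (hb : ∀ f : M, (∀ s : S, f * ι s = ι s * f) ↔ f ∈ Subgroup.center M)
    (hc : ∀ s₁ s₂ : S, s₁ ≠ s₂ → ι s₁ * (ι s₂)⁻¹ ∉ Subgroup.center M)
    (m : ℕ) (φ : M →* GL (Fin m) K)
    (hker : ∀ f ∈ φ.ker, f ∈ Subgroup.center M) :
    ∃ V : Submodule K (S →₀ K),
      (∀ (f : M), ∀ v ∈ V, Finsupp.mapDomain (fun s : S => f • s) v ∈ V) ∧
      FiniteDimensional K ((S →₀ K) ⧸ V) ∧
      Function.Injective (fun s : S => V.mkQ (Finsupp.single s (1 : K))) := by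
  classical
  set g : S → Matrix (Fin m) (Fin m) K := fun s => (φ (ι s) : Matrix (Fin m) (Fin m) K) with hg
  set T : (S →₀ K) →ₗ[K] Matrix (Fin m) (Fin m) K := Finsupp.linearCombination K g with hT
  refine ⟨LinearMap.ker T, ?_, ?_, ?_⟩
  · intro f v hv
    have hv0 : T v = 0 := hv
    -- conjugation linear map
    let A : Matrix (Fin m) (Fin m) K := (φ f : Matrix (Fin m) (Fin m) K)
    let B : Matrix (Fin m) (Fin m) K := ((φ f)⁻¹ : GL (Fin m) K)
    let L : Matrix (Fin m) (Fin m) K →ₗ[K] Matrix (Fin m) (Fin m) K :=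
      { toFun := fun X => A * X * B
        map_add' := by intro x y; simp [Matrix.add_mul, Matrix.mul_add]
        map_smul' := by intro c x; simp [Matrix.smul_mul, Matrix.mul_smul] }
    have key : T (Finsupp.mapDomain (fun s : S => f • s) v) = L (T v) := by
      rw [hT, Finsupp.linearCombination_mapDomain, Finsupp.apply_linearCombination]
      have hfun : (g ∘ fun s : S => f • s) = (⇑L ∘ g) := by
        funext s
        show g (f • s) = A * g s * B
        have : ι (f • s) = f * ι s * f⁻¹ := (ha f s).symm
        simp only [hg, this, map_mul, map_inv]
        rfl
      rw [hfun]
    show T _ = 0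
    rw [key, hv0, map_zero]
  · have : FiniteDimensional K (LinearMap.range T) := inferInstance
    exact Module.Finite.equiv T.quotKerEquivRange.symm
  · intro s₁ s₂ h
    by_contra hne
    have hmem : Finsupp.single s₁ (1:K) - Finsupp.single s₂ 1 ∈ LinearMap.ker T := by
      have := (Submodule.Quotient.eq _).mp h
      simpa using this
    have heq : g s₁ = g s₂ := by
      have : T (Finsupp.single s₁ (1:K)) - T (Finsupp.single s₂ 1) = 0 := by
        rw [← map_sub]; exact hmem
      have h1 : T (Finsupp.single s₁ (1:K)) = g s₁ := by simp [hT]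
      have h2 : T (Finsupp.single s₂ (1:K)) = g s₂ := by simp [hT]
      rw [h1, h2] at this
      exact sub_eq_zero.mp this
    have hGL : φ (ι s₁) = φ (ι s₂) := Units.ext heq
    have : ι s₁ * (ι s₂)⁻¹ ∈ φ.ker := by
      simp [MonoidHom.mem_ker, map_mul, hGL]
    exact hc s₁ s₂ hne (hker _ this)
end

section
/- Let K be a field, let M be a group acting on a set S, and let ι : S → M be an injective map satisfying: (a) equivariance, f·ι(s)·f⁻¹ = ι(f • s) for all f ∈ M and s ∈ S; and (b) C_M(ι(S)) = Z(M), where C_M(ι(S)) is the centralizer of the image of ι and Z(M) is the center of M. Suppose the M-module K[S] (the K-vector space with basis S, on which f ∈ M acts by permuting basis vectors: f·e_s = e_{f • s}) has an M-invariant K-subspace V of finite codimension such that the composition of s ↦ e_s with the quotient map p : K[S] → K[S]/V is injective on S. Then there is a finite-dimensional K-vector space W (namely W = K[S]/V) and a group homomorphism ρ : M → GL(W) whose kernel is contained in Z(M). -/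
section aux
variable {K M S : Type*} [Field K] [Group M] [MulAction M S]
variable (V : Submodule K (S →₀ K))

noncomputable def actAux (hV : ∀ (f : M), ∀ v ∈ V, Finsupp.mapDomain (fun s : S => f • s) v ∈ V)
    (f : M) : ((S →₀ K) ⧸ V) →ₗ[K] ((S →₀ K) ⧸ V) :=
  V.mapQ V (Finsupp.lmapDomain K K (fun s => f • s)) (hV f)

lemma actAux_single (hV : ∀ (f : M), ∀ v ∈ V, Finsupp.mapDomain (fun s : S => f • s) v ∈ V)
    (f : M) (s : S) (c : K) :
    actAux V hV f (Submodule.Quotient.mk (Finsupp.single s c)) =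
      Submodule.Quotient.mk (Finsupp.single (f • s) c) := by
  exact congrArg Submodule.Quotient.mk (Finsupp.mapDomain_single)

lemma actAux_mul (hV : ∀ (f : M), ∀ v ∈ V, Finsupp.mapDomain (fun s : S => f • s) v ∈ V)
    (f g : M) :
    actAux V hV (f * g) = (actAux V hV f).comp (actAux V hV g) := by
  refine Submodule.linearMap_qext _ ?_
  refine Finsupp.lhom_ext fun s c => ?_
  simp [actAux_single, mul_smul]

lemma actAux_one (hV : ∀ (f : M), ∀ v ∈ V, Finsupp.mapDomain (fun s : S => f • s) v ∈ V) :
    actAux V hV (1 : M) = LinearMap.id := by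
  refine Submodule.linearMap_qext _ ?_
  refine Finsupp.lhom_ext fun s c => ?_
  simp [actAux_single]

end aux

/-- Let `M` act on a set `S` and let `ι : S → M` be an injective equivariant map
(`f ι(s) f⁻¹ = ι(f • s)`) with `C_M(ι(S)) = Z(M)`. If the permutation `M`-module `K[S]` has an
`M`-invariant subspace `V` of finite codimension such that `s ↦ e_s mod V` is injective on `S`,
then there is a homomorphism `ρ : M → GL(K[S]/V)` into the linear automorphism group of the
finite-dimensional space `K[S]/V` whose kernel is contained in `Z(M)`. -/
theorem stmt12 (K : Type*) [Field K] {M S : Type*} [Group M] [MulAction M S]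
    (ι : S → M) (hι : Function.Injective ι)
    (ha : ∀ (f : M) (s : S), f * ι s * f⁻¹ = ι (f • s))
    (hb : ∀ f : M, (∀ s : S, f * ι s = ι s * f) ↔ f ∈ Subgroup.center M)
    (V : Submodule K (S →₀ K))
    (hV : ∀ (f : M), ∀ v ∈ V, Finsupp.mapDomain (fun s : S => f • s) v ∈ V)
    (hfin : FiniteDimensional K ((S →₀ K) ⧸ V))
    (hinj : Function.Injective (fun s : S => V.mkQ (Finsupp.single s (1 : K)))) :
    ∃ ρ : M →* (((S →₀ K) ⧸ V) ≃ₗ[K] ((S →₀ K) ⧸ V)),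
      ∀ f : M, ρ f = 1 → f ∈ Subgroup.center M := by
  have key : ∀ f g : M, (actAux V hV f).comp (actAux V hV g) = actAux V hV (f * g) :=
    fun f g => (actAux_mul V hV f g).symm
  refine ⟨MonoidHom.mk' (fun f => LinearEquiv.ofLinear (actAux V hV f) (actAux V hV f⁻¹)
      (by rw [key, mul_inv_cancel, actAux_one])
      (by rw [key, inv_mul_cancel, actAux_one])) (fun f g => ?_), ?_⟩
  · apply LinearEquiv.toLinearMap_injective
    ext x
    simp [actAux_mul]
  · intro f hf
    rw [← hb]
    intro s
    have hs : f • s = s := by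
      apply hinj
      have := congrArg (fun e : ((S →₀ K) ⧸ V) ≃ₗ[K] ((S →₀ K) ⧸ V) =>
        e (V.mkQ (Finsupp.single s (1 : K)))) hf
      simpa [Submodule.mkQ_apply, actAux_single] using this
    have := ha f s
    rw [hs] at this
    exact mul_inv_eq_iff_eq_mul.mp this
end
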